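/- Let q be a nonzero complex number. Then the quotient ring ℂ[x]/⟨x² − q⟩ is isomorphic, as a ℂ-algebra, to the quotient of the Laurent polynomial ring ℂ[z, z⁻¹] by the ideal generated by 1 − q·z⁻². -/

import Mathlib

open Polynomial LaurentPolynomial

/-- mirror symmetry for ℙ¹: for any nonzero complex number `q`, the ring
`ℂ[x]/⟨x² − q⟩` (the quantum cohomology `QH*(ℙ¹, ℂ)` with quantum parameter `q`) is
isomorphic as a ℂ-algebra to `ℂ[z, z⁻¹]/⟨1 − q·z⁻²⟩` (the Jacobian ring of the mirror
Landau–Ginzburg superpotential `W(z) = z + q/z`). -/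
theorem quantum_cohomology_P1_iso_jacobian_ring (q : ℂ) (hq : q ≠ 0) :
    Nonempty
      ((ℂ[X] ⧸ Ideal.span {(X : ℂ[X]) ^ 2 - Polynomial.C q}) ≃ₐ[ℂ]
        (LaurentPolynomial ℂ ⧸
          Ideal.span {(1 : LaurentPolynomial ℂ) - LaurentPolynomial.C q * T (-2)})) := by
  set g : LaurentPolynomial ℂ :=
    (1 : LaurentPolynomial ℂ) - LaurentPolynomial.C q * T (-2) with hgdef
  set I : Ideal ℂ[X] := Ideal.span {(X : ℂ[X]) ^ 2 - Polynomial.C q} with hIdef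
  set J : Ideal (LaurentPolynomial ℂ) := Ideal.span {g} with hJdef
  set x : ℂ[X] ⧸ I := Ideal.Quotient.mk I X with hxdef
  have hx2 : x ^ 2 = algebraMap ℂ _ q := by
    have h0 : Ideal.Quotient.mk I ((X : ℂ[X]) ^ 2 - Polynomial.C q) = 0 :=
      Ideal.Quotient.eq_zero_iff_mem.mpr (Ideal.subset_span rfl)
    have h1 : x ^ 2 = Ideal.Quotient.mk I (Polynomial.C q) := by
      have := sub_eq_zero.mp (by simpa [map_sub, map_pow] using h0)
      simpa [hxdef] using this
    rw [h1]
    rfl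
  have hmkC : ∀ c : ℂ, Ideal.Quotient.mk I (Polynomial.C c) = algebraMap ℂ _ c := fun c => rfl
  have hxinv : (algebraMap ℂ (ℂ[X] ⧸ I) q⁻¹ * x) * x = 1 := by
    rw [mul_assoc, ← sq, hx2, ← map_mul, inv_mul_cancel₀ hq, map_one]
  set u : (ℂ[X] ⧸ I)ˣ :=
    ⟨x, algebraMap ℂ _ q⁻¹ * x, by rw [mul_comm]; exact hxinv, hxinv⟩ with hudef
  set φ : LaurentPolynomial ℂ →ₐ[ℂ] (ℂ[X] ⧸ I) :=
    (AddMonoidAlgebra.lift ℂ _ ℤ) ((Units.coeHom _).comp (zpowersHom _ u)) with hφdef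
  have hφT : ∀ n : ℤ, φ (T n) = ((u ^ n : (ℂ[X] ⧸ I)ˣ) : ℂ[X] ⧸ I) := by
    intro n
    show φ (AddMonoidAlgebra.single n 1) = _
    rw [hφdef]
    rw [AddMonoidAlgebra.lift_single]
    simp
  have huneg2 : ((u ^ (-2 : ℤ) : (ℂ[X] ⧸ I)ˣ) : ℂ[X] ⧸ I) = algebraMap ℂ _ q⁻¹ := by
    have h1 : (u ^ (-2 : ℤ)) = (u⁻¹) ^ 2 := by group
    rw [h1, Units.val_pow_eq_pow_val]
    have h2 : ((u⁻¹ : (ℂ[X] ⧸ I)ˣ) : ℂ[X] ⧸ I) = algebraMap ℂ _ q⁻¹ * x := rfl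
    rw [h2, mul_pow, hx2, ← map_pow, ← map_mul]
    congr 1
    field_simp
  have hφg : φ g = 0 := by
    rw [hgdef, map_sub, map_one, map_mul, hφT (-2), huneg2]
    have hC : φ (LaurentPolynomial.C q) = algebraMap ℂ _ q := by
      rw [LaurentPolynomial.C_eq_algebraMap]; exact φ.commutes q
    rw [hC, ← map_mul, mul_inv_cancel₀ hq, map_one, sub_self]
  set ψ : (LaurentPolynomial ℂ ⧸ J) →ₐ[ℂ] (ℂ[X] ⧸ I) :=
    Ideal.Quotient.liftₐ J φ (by
      intro a ha
      obtain ⟨c, rfl⟩ := Ideal.mem_span_singleton'.mp ha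
      rw [map_mul, hφg, mul_zero]) with hψdef
  have hψmk : ∀ p, ψ (Ideal.Quotient.mk J p) = φ p := fun p => rfl
  -- the other direction
  have hT2g : LaurentPolynomial.T 2 * g = T 2 - LaurentPolynomial.C q := by
    rw [hgdef, mul_sub, mul_one, mul_left_comm, ← T_add]
    norm_num [T_zero]
  have hmkCJ : ∀ c : ℂ, Ideal.Quotient.mk J (LaurentPolynomial.C c) = algebraMap ℂ _ c :=
    fun c => rfl
  set θ : (ℂ[X] ⧸ I) →ₐ[ℂ] (LaurentPolynomial ℂ ⧸ J) :=
    Ideal.Quotient.liftₐ I (Polynomial.aeval (Ideal.Quotient.mk J (T 1))) (by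
      intro a ha
      obtain ⟨c, rfl⟩ := Ideal.mem_span_singleton'.mp ha
      rw [map_mul]
      have : (Polynomial.aeval (Ideal.Quotient.mk J (T 1)))
          ((X : ℂ[X]) ^ 2 - Polynomial.C q) = 0 := by
        rw [map_sub, map_pow, aeval_X, aeval_C, ← hmkCJ q, ← map_pow, ← map_sub]
        apply Ideal.Quotient.eq_zero_iff_mem.mpr
        have hT12 : (T 1 : LaurentPolynomial ℂ) ^ 2 = T 2 := by
          rw [T_pow]; norm_num
        rw [hT12, ← hT2g]
        exact Ideal.mul_mem_left _ _ (Ideal.subset_span rfl)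
      rw [this, mul_zero]) with hθdef
  have hθmk : ∀ p, θ (Ideal.Quotient.mk I p) = Polynomial.aeval (Ideal.Quotient.mk J (T 1)) p :=
    fun p => rfl
  have hθx : θ x = Ideal.Quotient.mk J (T 1) := by rw [hxdef, hθmk, aeval_X]
  -- θ ∘ ψ = id
  have hθφT : ∀ n : ℤ, θ (φ (T n)) = Ideal.Quotient.mk J (T n) := by
    have hv : (Ideal.Quotient.mk J (T (-1))) * (Ideal.Quotient.mk J (T 1)) = 1 := by
      rw [← map_mul, ← T_add]
      norm_num [T_zero]
    set v : (LaurentPolynomial ℂ ⧸ J)ˣ :=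
      ⟨Ideal.Quotient.mk J (T 1), Ideal.Quotient.mk J (T (-1)), by rw [mul_comm]; exact hv, hv⟩
      with hvdef
    set f1 : Multiplicative ℤ →* (LaurentPolynomial ℂ ⧸ J) :=
      (θ.toRingHom.toMonoidHom).comp ((Units.coeHom _).comp (zpowersHom _ u)) with hf1def
    set f2 : Multiplicative ℤ →* (LaurentPolynomial ℂ ⧸ J) :=
      (Units.coeHom _).comp (zpowersHom _ v) with hf2def
    have hext : f1 = f2 := by
      apply MonoidHom.ext_mint
      show θ ((u ^ (Multiplicative.toAdd (Multiplicative.ofAdd (1 : ℤ))) : _ˣ) : ℂ[X] ⧸ I) =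
        ((v ^ (Multiplicative.toAdd (Multiplicative.ofAdd (1 : ℤ))) : _ˣ) : _)
      rw [toAdd_ofAdd, zpow_one, zpow_one]
      exact hθx
    have hvpow : ∀ n : ℤ, ((v ^ n : _ˣ) : LaurentPolynomial ℂ ⧸ J) = Ideal.Quotient.mk J (T n) := by
      intro n
      induction n using Int.induction_on with
      | zero => simp [T_zero]
      | succ k ih =>
          rw [zpow_add, zpow_one, Units.val_mul, ih, T_add, map_mul]
      | pred k ih =>
          rw [sub_eq_add_neg, zpow_add, Units.val_mul, ih, T_add, map_mul, zpow_neg_one]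
          rfl
    intro n
    have h1 : θ (φ (T n)) = f1 (Multiplicative.ofAdd n) := by
      rw [hφT n]
      rfl
    rw [h1, hext]
    show ((v ^ ((Multiplicative.ofAdd n).toAdd) : _ˣ) : LaurentPolynomial ℂ ⧸ J) = _
    rw [toAdd_ofAdd, hvpow]
  refine ⟨AlgEquiv.ofAlgHom θ ψ ?_ ?_⟩
  · -- θ.comp ψ = id on Laurent quotient
    apply Ideal.Quotient.algHom_ext
    apply AddMonoidAlgebra.algHom_ext
    intro n
    show θ (ψ (Ideal.Quotient.mk J (AddMonoidAlgebra.single n 1))) = Ideal.Quotient.mk J (AddMonoidAlgebra.single n 1)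
    have hTn : (AddMonoidAlgebra.single n 1 : LaurentPolynomial ℂ) = T n := rfl
    rw [hTn, hψmk, hθφT]
    exact Subsingleton.elim _ _
  · -- ψ.comp θ = id on polynomial quotient
    apply Ideal.Quotient.algHom_ext
    apply Polynomial.algHom_ext
    show ψ (θ (Ideal.Quotient.mk I X)) = Ideal.Quotient.mk I X
    rw [← hxdef, hθx, hψmk, hφT 1, zpow_one]
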